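/- arXiv:2004.05944 — 8 statements merged into one kernel-verified Lean document; each statement's English description precedes it below -/
import Mathlib

section
/- Let a > b > 0 with √a - √b > √2 and let β* be the smaller root of g(β) = 0 where g(β) = (b·e^{2β} + a·e^{-2β})/2 - (a+b)/2 + 1. Define g̃(β) = g(β) for β < (1/4)·log(a/b) and g̃(β) = √(ab) - (a+b)/2 + 1 otherwise. Then g̃(β) < 0 for all β > β*. -/
/-- If `β*` is the smaller root of `g β = 0`, then `g̃ β < 0`
for all `β > β*`. -/
theorem stmt4 (a b : ℝ) (hb : 0 < b) (hab : b < a)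
    (hsep : Real.sqrt 2 < Real.sqrt a - Real.sqrt b)
    (g : ℝ → ℝ)
    (hg : ∀ β, g β = (b * Real.exp (2 * β) + a * Real.exp (-2 * β)) / 2
      - (a + b) / 2 + 1)
    (βstar : ℝ) (hroot : g βstar = 0) (hsmall : ∀ β, g β = 0 → βstar ≤ β) :
    let gt : ℝ → ℝ := fun β => if β < (1 / 4) * Real.log (a / b) then g β
      else Real.sqrt (a * b) - (a + b) / 2 + 1
    ∀ β : ℝ, βstar < β → gt β < 0 := by
  intro gt β hβ
  have ha : 0 < a := hb.trans hab
  set β₀ : ℝ := (1 / 4) * Real.log (a / b) with hβ₀def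
  have gdef : g = fun β => (b * Real.exp (2 * β) + a * Real.exp (-2 * β)) / 2
      - (a + b) / 2 + 1 := funext hg
  -- the minimum value is negative
  have hm : Real.sqrt (a * b) - (a + b) / 2 + 1 < 0 := by
    have h2 : Real.sqrt 2 ^ 2 = 2 := Real.sq_sqrt (by norm_num)
    have hA : Real.sqrt a ^ 2 = a := Real.sq_sqrt ha.le
    have hB : Real.sqrt b ^ 2 = b := Real.sq_sqrt hb.le
    have hAB : Real.sqrt (a * b) = Real.sqrt a * Real.sqrt b :=
      Real.sqrt_mul ha.le b
    nlinarith [Real.sqrt_nonneg 2, Real.sqrt_nonneg a, Real.sqrt_nonneg b]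
  -- value of g at β₀
  have hexp₀ : Real.exp (2 * β₀) = Real.sqrt (a / b) := by
    rw [show (2 : ℝ) * β₀ = Real.log (a/b) / 2 by rw [hβ₀def]; ring,
      ← Real.log_sqrt (div_pos ha hb).le,
      Real.exp_log (Real.sqrt_pos.mpr (div_pos ha hb))]
  have hexp₀' : Real.exp (-2 * β₀) = Real.sqrt (b / a) := by
    have h1 : Real.exp (-2 * β₀) = (Real.exp (2 * β₀))⁻¹ := by
      rw [← Real.exp_neg]; ring_nf
    rw [h1, hexp₀, ← Real.sqrt_inv, inv_div]
  have hgβ₀ : g β₀ = Real.sqrt (a * b) - (a + b) / 2 + 1 := by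
    rw [hg, hexp₀, hexp₀']
    have h1 : b * Real.sqrt (a / b) = Real.sqrt (a * b) := by
      rw [show a * b = b^2 * (a / b) by field_simp,
        Real.sqrt_mul (sq_nonneg b), Real.sqrt_sq hb.le]
    have h2 : a * Real.sqrt (b / a) = Real.sqrt (a * b) := by
      rw [show a * b = a^2 * (b / a) by field_simp,
        Real.sqrt_mul (sq_nonneg a), Real.sqrt_sq ha.le]
    rw [h1, h2]; ring
  have hgβ₀neg : g β₀ < 0 := by rw [hgβ₀]; exact hm
  -- derivative of g
  have hder : ∀ x : ℝ, HasDerivAt g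
      (b * Real.exp (2 * x) - a * Real.exp (-2 * x)) x := by
    intro x
    have h1 : HasDerivAt (fun y : ℝ => 2 * y) 2 x := by
      simpa using (hasDerivAt_id x).const_mul (2 : ℝ)
    have h2 : HasDerivAt (fun y : ℝ => -2 * y) (-2) x := by
      simpa using (hasDerivAt_id x).const_mul (-2 : ℝ)
    have h3 := (((h1.exp.const_mul b).add (h2.exp.const_mul a)).div_const 2
      |>.sub_const ((a + b) / 2)).add_const 1
    rw [gdef]
    exact h3.congr_deriv (by ring)
  have hcont : Continuous g := by
    rw [gdef]; fun_prop
  -- g strictly decreasing on Iic β₀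
  have hanti : StrictAntiOn g (Set.Iic β₀) := by
    apply strictAntiOn_of_deriv_neg (convex_Iic β₀) hcont.continuousOn
    intro x hx
    rw [interior_Iic] at hx
    rw [(hder x).deriv]
    have hlt : Real.exp (4 * x) < a / b := by
      rw [← Real.exp_log (div_pos ha hb)]
      apply Real.exp_lt_exp.mpr
      have : x < β₀ := hx
      rw [hβ₀def] at this; linarith
    have he : Real.exp (2 * x) = Real.exp (4 * x) * Real.exp (-2 * x) := by
      rw [← Real.exp_add]; ring_nf
    have hep : 0 < Real.exp (-2 * x) := Real.exp_pos _
    rw [he]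
    have : b * Real.exp (4 * x) < a := by
      have := (lt_div_iff₀ hb).mp hlt; linarith
    nlinarith
  -- βstar < β₀ via IVT
  have hβsβ₀ : βstar < β₀ := by
    set β₁ : ℝ := min β₀ (-(1 / 2) * Real.log ((a + b) / a)) with hβ₁def
    have hβ₁le : β₁ ≤ β₀ := min_le_left _ _
    have hgβ₁ : 0 < g β₁ := by
      rw [hg]
      have h1 : Real.log ((a + b) / a) ≤ -2 * β₁ := by
        have := min_le_right β₀ (-(1 / 2) * Real.log ((a + b) / a))
        have h := hβ₁def ▸ this
        linarith
      have h2 : (a + b) / a ≤ Real.exp (-2 * β₁) := by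
        rw [← Real.exp_log (div_pos (by linarith) ha)]
        exact Real.exp_le_exp.mpr h1
      have h3 : a + b ≤ a * Real.exp (-2 * β₁) := by
        have := mul_le_mul_of_nonneg_left h2 ha.le
        rwa [mul_div_cancel₀ _ ha.ne'] at this
      have h4 : 0 < b * Real.exp (2 * β₁) := by positivity
      linarith
    have hivt : (0 : ℝ) ∈ g '' Set.Icc β₁ β₀ := by
      apply intermediate_value_Icc' hβ₁le hcont.continuousOn
      exact ⟨hgβ₀neg.le, hgβ₁.le⟩
    obtain ⟨r, hr, hgr⟩ := hivt
    have h5 : βstar ≤ r := hsmall r hgr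
    have h6 : r < β₀ := lt_of_le_of_ne hr.2 (by rintro rfl; linarith)
    linarith
  -- conclude
  by_cases hc : β < β₀
  · have : gt β = g β := if_pos hc
    rw [this]
    have := hanti (Set.mem_Iic.mpr hβsβ₀.le) (Set.mem_Iic.mpr hc.le) hβ
    linarith [hroot]
  · have : gt β = Real.sqrt (a * b) - (a + b) / 2 + 1 := if_neg hc
    rw [this]; exact hm
end

section
/- Let a > b > 0 and β > 0. Define f_β(t) = √(t² + ab) - t·(log(√(t² + ab) + t) - log(b)) - (a+b)/2 + 1 + 2βt. Then f_β attains its global maximum at t* = (b·e^{2β} - a·e^{-2β})/2, and f_β(t*) = (b·e^{2β} + a·e^{-2β})/2 - (a+b)/2 + 1. -/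
/-- `f_β` attains its global maximum at
`t* = (b e^{2β} - a e^{-2β})/2`, with maximum value
`(b e^{2β} + a e^{-2β})/2 - (a+b)/2 + 1`. -/
theorem stmt7 (a b β : ℝ) (hb : 0 < b) (hab : b < a) (hβ : 0 < β) :
    let f : ℝ → ℝ := fun t => Real.sqrt (t ^ 2 + a * b)
      - t * (Real.log (Real.sqrt (t ^ 2 + a * b) + t) - Real.log b)
      - (a + b) / 2 + 1 + 2 * β * t
    let tstar : ℝ := (b * Real.exp (2 * β) - a * Real.exp (-2 * β)) / 2
    (∀ t : ℝ, f t ≤ f tstar) ∧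
      f tstar = (b * Real.exp (2 * β) + a * Real.exp (-2 * β)) / 2
        - (a + b) / 2 + 1 := by
  intro f tstar
  have ha : 0 < a := hb.trans hab
  have hab0 : 0 < a * b := mul_pos ha hb
  have hq : ∀ t : ℝ, 0 < t ^ 2 + a * b := fun t => by positivity
  have hsq : ∀ t : ℝ, 0 < Real.sqrt (t ^ 2 + a * b) :=
    fun t => Real.sqrt_pos.2 (hq t)
  have hs : ∀ t : ℝ, 0 < Real.sqrt (t ^ 2 + a * b) + t := by
    intro t
    have h1 : |t| < Real.sqrt (t ^ 2 + a * b) := by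
      have h2 : Real.sqrt (t ^ 2) < Real.sqrt (t ^ 2 + a * b) :=
        Real.sqrt_lt_sqrt (sq_nonneg t) (by linarith)
      simpa [Real.sqrt_sq_eq_abs] using h2
    linarith [neg_abs_le t]
  set x := b * Real.exp (2 * β) with hxdef
  set y := a * Real.exp (-2 * β) with hydef
  have hx : 0 < x := mul_pos hb (Real.exp_pos _)
  have hy : 0 < y := mul_pos ha (Real.exp_pos _)
  have hxy : x * y = a * b := by
    rw [hxdef, hydef]
    have : Real.exp (2 * β) * Real.exp (-2 * β) = 1 := by
      rw [← Real.exp_add]; norm_num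
    nlinarith [this]
  have htstar : tstar = (x - y) / 2 := rfl
  have hsqstar : Real.sqrt (tstar ^ 2 + a * b) = (x + y) / 2 := by
    have h1 : tstar ^ 2 + a * b = ((x + y) / 2) ^ 2 := by
      rw [htstar, ← hxy]; ring
    rw [h1, Real.sqrt_sq (by positivity)]
  have hstar : Real.sqrt (tstar ^ 2 + a * b) + tstar = x := by
    rw [hsqstar, htstar]; ring
  have hlogx : Real.log x = Real.log b + 2 * β := by
    rw [hxdef, Real.log_mul hb.ne' (Real.exp_ne_zero _), Real.log_exp]
  -- derivative of f
  have hder : ∀ t : ℝ, HasDerivAt f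
      (2 * β + Real.log b - Real.log (Real.sqrt (t ^ 2 + a * b) + t)) t := by
    intro t
    have hsne := (hsq t).ne'
    have hsne2 := (hs t).ne'
    have h1 : HasDerivAt (fun t : ℝ => t ^ 2 + a * b) (2 * t) t := by
      simpa using (hasDerivAt_pow 2 t).add_const (a * b)
    have h2 : HasDerivAt (fun t : ℝ => Real.sqrt (t ^ 2 + a * b))
        (t / Real.sqrt (t ^ 2 + a * b)) t := by
      have h := h1.sqrt (hq t).ne'
      convert h using 1
      field_simp
    have h3 : HasDerivAt (fun t : ℝ => Real.sqrt (t ^ 2 + a * b) + t)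
        (t / Real.sqrt (t ^ 2 + a * b) + 1) t := h2.add (hasDerivAt_id t)
    have h4 := h3.log hsne2
    have h5 := h4.sub_const (Real.log b)
    have h6 := (hasDerivAt_id t).mul h5
    have h7 := ((h2.sub h6).sub_const ((a + b) / 2)).add_const 1
    have h8 := h7.add ((hasDerivAt_id t).const_mul (2 * β))
    have h9 : HasDerivAt f
        (t / Real.sqrt (t ^ 2 + a * b) -
          (1 * (Real.log (Real.sqrt (t ^ 2 + a * b) + t) - Real.log b) +
            t * ((t / Real.sqrt (t ^ 2 + a * b) + 1) /
              (Real.sqrt (t ^ 2 + a * b) + t))) + 2 * β * 1) t := h8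
    convert h9 using 1
    have hkey : t / Real.sqrt (t ^ 2 + a * b) -
        t * ((t / Real.sqrt (t ^ 2 + a * b) + 1) /
          (Real.sqrt (t ^ 2 + a * b) + t)) = 0 := by
      field_simp
      ring
    linarith [hkey]
  have hderiv : ∀ t : ℝ, deriv f t =
      2 * β + Real.log b - Real.log (Real.sqrt (t ^ 2 + a * b) + t) :=
    fun t => (hder t).deriv
  have hcont : Continuous f := by
    have : Differentiable ℝ f := fun t => (hder t).differentiableAt
    exact this.continuous
  -- strict monotonicity of s
  have hsmono : StrictMono (fun t : ℝ => Real.sqrt (t ^ 2 + a * b) + t) := by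
    apply strictMono_of_deriv_pos
    intro t
    have h1 : HasDerivAt (fun t : ℝ => t ^ 2 + a * b) (2 * t) t := by
      simpa using (hasDerivAt_pow 2 t).add_const (a * b)
    have h2 : HasDerivAt (fun t : ℝ => Real.sqrt (t ^ 2 + a * b))
        (t / Real.sqrt (t ^ 2 + a * b)) t := by
      have h := h1.sqrt (hq t).ne'
      convert h using 1
      field_simp
    have h3 : HasDerivAt (fun t : ℝ => Real.sqrt (t ^ 2 + a * b) + t)
        (t / Real.sqrt (t ^ 2 + a * b) + 1) t := h2.add (hasDerivAt_id t)
    rw [h3.deriv]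
    have : t / Real.sqrt (t ^ 2 + a * b) + 1 =
        (Real.sqrt (t ^ 2 + a * b) + t) / Real.sqrt (t ^ 2 + a * b) := by
      field_simp
      ring
    rw [this]
    exact div_pos (hs t) (hsq t)
  constructor
  · intro t
    rcases lt_trichotomy t tstar with h | h | h
    · have hmono : StrictMonoOn f (Set.Iic tstar) := by
        apply strictMonoOn_of_deriv_pos (convex_Iic tstar) hcont.continuousOn
        intro u hu
        rw [interior_Iic] at hu
        rw [hderiv u]
        have hlt : Real.sqrt (u ^ 2 + a * b) + u < x := by
          rw [← hstar]; exact hsmono hu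
        have := Real.log_lt_log (hs u) hlt
        rw [hlogx] at this
        linarith
      exact le_of_lt (hmono (le_of_lt h) (le_refl tstar) h)
    · rw [h]
    · have hanti : StrictAntiOn f (Set.Ici tstar) := by
        apply strictAntiOn_of_deriv_neg (convex_Ici tstar) hcont.continuousOn
        intro u hu
        rw [interior_Ici] at hu
        rw [hderiv u]
        have hlt : x < Real.sqrt (u ^ 2 + a * b) + u := by
          rw [← hstar]; exact hsmono hu
        have := Real.log_lt_log hx hlt
        rw [hlogx] at this
        linarith
      exact le_of_lt (hanti (le_refl tstar) (le_of_lt h) h)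
  · show Real.sqrt (tstar ^ 2 + a * b)
      - tstar * (Real.log (Real.sqrt (tstar ^ 2 + a * b) + tstar) - Real.log b)
      - (a + b) / 2 + 1 + 2 * β * tstar = _
    rw [hstar, hsqstar, hlogx]
    ring
end

section
/- Let a > b > 0 and β > 0. Define f_β(t) = √(t² + ab) - t·(log(√(t² + ab) + t) - log(b)) - (a+b)/2 + 1 + 2βt, g(β) = (b·e^{2β} + a·e^{-2β})/2 - (a+b)/2 + 1, and g̃(β) = g(β) if β < (1/4)·log(a/b), g̃(β) = √(ab) - (a+b)/2 + 1 otherwise. Then f_β(t) ≤ g̃(β) for all t ≤ 0. -/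
noncomputable def phi (a b β : ℝ) : ℝ → ℝ := fun u =>
  (b * Real.exp u + a * Real.exp (-u)) / 2
    + (b * Real.exp u - a * Real.exp (-u)) * (β - u / 2)

lemma phi_hasDerivAt (a b β u : ℝ) :
    HasDerivAt (phi a b β) ((b * Real.exp u + a * Real.exp (-u)) * (β - u / 2)) u := by
  have h1 : HasDerivAt (fun u : ℝ => Real.exp u) (Real.exp u) u := Real.hasDerivAt_exp u
  have h2 : HasDerivAt (fun u : ℝ => Real.exp (-u)) (Real.exp (-u) * (-1)) u :=
    ((hasDerivAt_id u).neg).exp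
  have h3 : HasDerivAt (fun u : ℝ => β - u / 2) (-(1/2)) u := by
    simpa using ((hasDerivAt_id u).div_const 2).const_sub β
  have hA : HasDerivAt (fun u => (b * Real.exp u + a * Real.exp (-u)) / 2)
      ((b * Real.exp u + a * (Real.exp (-u) * (-1))) / 2) u :=
    (((h1.const_mul b).add (h2.const_mul a))).div_const 2
  have hB : HasDerivAt (fun u => (b * Real.exp u - a * Real.exp (-u)) * (β - u / 2))
      ((b * Real.exp u - a * (Real.exp (-u) * (-1))) * (β - u / 2)
        + (b * Real.exp u - a * Real.exp (-u)) * (-(1/2))) u :=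
    (((h1.const_mul b).sub (h2.const_mul a))).mul h3
  have := hA.add hB
  refine this.congr_deriv ?_
  ring

lemma phi_cont (a b β : ℝ) : Continuous (phi a b β) := by
  unfold phi; continuity

lemma phi_mono (a b β : ℝ) (ha : 0 ≤ a) (hb : 0 ≤ b) :
    MonotoneOn (phi a b β) (Set.Iic (2 * β)) := by
  apply monotoneOn_of_deriv_nonneg (convex_Iic _) (phi_cont a b β).continuousOn
  · intro x _
    exact (phi_hasDerivAt a b β x).differentiableAt.differentiableWithinAt
  · intro x hx
    rw [(phi_hasDerivAt a b β x).deriv]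
    have hx' : x < 2 * β := by simpa using hx
    have h1 : 0 ≤ b * Real.exp x + a * Real.exp (-x) := by positivity
    have h2 : 0 ≤ β - x / 2 := by linarith
    positivity

lemma phi_anti (a b β : ℝ) (ha : 0 ≤ a) (hb : 0 ≤ b) :
    AntitoneOn (phi a b β) (Set.Ici (2 * β)) := by
  apply antitoneOn_of_deriv_nonpos (convex_Ici _) (phi_cont a b β).continuousOn
  · intro x _
    exact (phi_hasDerivAt a b β x).differentiableAt.differentiableWithinAt
  · intro x hx
    rw [(phi_hasDerivAt a b β x).deriv]
    have hx' : 2 * β < x := by simpa using hx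
    have h1 : 0 ≤ b * Real.exp x + a * Real.exp (-x) := by positivity
    have h2 : β - x / 2 ≤ 0 := by linarith
    exact mul_nonpos_of_nonneg_of_nonpos h1 h2

lemma phi_max (a b β : ℝ) (ha : 0 ≤ a) (hb : 0 ≤ b) (u : ℝ) :
    phi a b β u ≤ phi a b β (2 * β) := by
  rcases le_total u (2 * β) with h | h
  · exact phi_mono a b β ha hb (Set.mem_Iic.mpr h) (Set.mem_Iic.mpr le_rfl) h
  · exact phi_anti a b β ha hb (Set.mem_Ici.mpr le_rfl) (Set.mem_Ici.mpr h) h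

/-- For `a > b > 0` and `β > 0`, `f_β(t) ≤ g̃(β)` for all `t ≤ 0`. -/
theorem stmt8 (a b β : ℝ) (hb : 0 < b) (hab : b < a) (hβ : 0 < β) :
    let f : ℝ → ℝ := fun t => Real.sqrt (t ^ 2 + a * b)
      - t * (Real.log (Real.sqrt (t ^ 2 + a * b) + t) - Real.log b)
      - (a + b) / 2 + 1 + 2 * β * t
    let g : ℝ → ℝ := fun β' => (b * Real.exp (2 * β') + a * Real.exp (-2 * β')) / 2
      - (a + b) / 2 + 1
    let gt : ℝ → ℝ := fun β' => if β' < (1 / 4) * Real.log (a / b) then g β'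
      else Real.sqrt (a * b) - (a + b) / 2 + 1
    ∀ t : ℝ, t ≤ 0 → f t ≤ gt β := by
  intro f g gt t ht
  have ha : 0 < a := hb.trans hab
  set r := Real.sqrt (t ^ 2 + a * b) with hrdef
  have hr2 : r ^ 2 = t ^ 2 + a * b := Real.sq_sqrt (by positivity)
  have hrabs : |t| < r := by
    have : Real.sqrt (t ^ 2) < r := Real.sqrt_lt_sqrt (by positivity) (by nlinarith)
    simpa [Real.sqrt_sq_eq_abs] using this
  have hs : 0 < r + t := by
    have := neg_abs_le t
    linarith [hrabs]
  set s := r + t with hsdef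
  set u := Real.log (s / b) with hudef
  have hsb : 0 < s / b := div_pos hs hb
  have heu : Real.exp u = s / b := Real.exp_log hsb
  have hbeu : b * Real.exp u = s := by rw [heu]; field_simp
  have hrt : (r - t) * s = a * b := by nlinarith
  have haeu : a * Real.exp (-u) = a * b / s := by
    rw [Real.exp_neg, heu]
    field_simp
  have hulog : Real.log s - Real.log b = u := by
    rw [hudef, Real.log_div hs.ne' hb.ne']
  have hft : f t = phi a b β u - (a + b) / 2 + 1 := by
    show r - t * (Real.log s - Real.log b) - (a + b) / 2 + 1 + 2 * β * t
        = phi a b β u - (a + b) / 2 + 1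
    rw [hulog]
    unfold phi
    rw [hbeu, haeu]
    have habs : a * b / s = r - t := by
      rw [div_eq_iff hs.ne']; linarith [hrt]
    rw [habs, hsdef]
    ring
  have hsab : s ≤ Real.sqrt (a * b) := by
    have hs2 : s ^ 2 ≤ a * b := by nlinarith
    calc s = Real.sqrt (s ^ 2) := (Real.sqrt_sq hs.le).symm
    _ ≤ Real.sqrt (a * b) := Real.sqrt_le_sqrt hs2
  have hsqab : b * Real.sqrt (a / b) = Real.sqrt (a * b) := by
    rw [← Real.sqrt_sq hb.le, ← Real.sqrt_mul (by positivity)]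
    congr 1
    field_simp
    ring
    rw [Real.sq_sqrt (sq_nonneg b)]
  have hu0 : u ≤ (1 / 2) * Real.log (a / b) := by
    have h1 : s / b ≤ Real.sqrt (a / b) := by
      rw [show Real.sqrt (a/b) = Real.sqrt (a*b) / b by
        rw [eq_div_iff hb.ne', mul_comm, hsqab]]
      gcongr
    calc u ≤ Real.log (Real.sqrt (a / b)) := Real.log_le_log hsb h1
    _ = (1 / 2) * Real.log (a / b) := by
        rw [Real.log_sqrt (by positivity)]; ring
  have he0 : Real.exp ((1/2) * Real.log (a/b)) = Real.sqrt (a/b) := by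
    rw [Real.sqrt_eq_rpow, Real.rpow_def_of_pos (by positivity)]
    ring_nf
  have hphisq : phi a b β ((1/2) * Real.log (a/b)) = Real.sqrt (a * b) := by
    have he0' : Real.exp (-((1/2) * Real.log (a/b))) = Real.sqrt (b/a) := by
      rw [Real.exp_neg, he0, ← Real.sqrt_inv]
      congr 1
      field_simp
    have h1 : b * Real.exp ((1/2) * Real.log (a/b)) = Real.sqrt (a*b) := by
      rw [he0, hsqab]
    have h2 : a * Real.exp (-((1/2) * Real.log (a/b))) = Real.sqrt (a*b) := by
      rw [he0', ← Real.sqrt_sq ha.le, ← Real.sqrt_mul (by positivity)]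
      congr 1
      field_simp
      ring
      rw [Real.sq_sqrt (sq_nonneg a)]
    unfold phi
    rw [h1, h2]
    ring
  by_cases hc : β < (1 / 4) * Real.log (a / b)
  · have hgt : gt β = phi a b β (2 * β) - (a + b) / 2 + 1 := by
      show (if β < (1 / 4) * Real.log (a / b) then g β
        else Real.sqrt (a * b) - (a + b) / 2 + 1) = _
      rw [if_pos hc]
      show (b * Real.exp (2 * β) + a * Real.exp (-2 * β)) / 2 - (a + b) / 2 + 1 = _
      unfold phi
      rw [show -(2*β) = -2*β by ring]
      ring
    rw [hft, hgt]
    have := phi_max a b β ha.le hb.le u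
    linarith
  · have hgt : gt β = Real.sqrt (a * b) - (a + b) / 2 + 1 := by
      show (if β < (1 / 4) * Real.log (a / b) then g β
        else Real.sqrt (a * b) - (a + b) / 2 + 1) = _
      rw [if_neg hc]
    have h2β : (1/2) * Real.log (a/b) ≤ 2 * β := by
      push_neg at hc
      linarith
    have hmono := phi_mono a b β ha.le hb.le (Set.mem_Iic.mpr (hu0.trans h2β))
      (Set.mem_Iic.mpr h2β) hu0
    rw [hft, hgt, ← hphisq]
    linarith
end

section
/- Let a > b > 0 with √a - √b > √2, β > β* (where β* is the smaller root of g(β) = (b·e^{2β} + a·e^{-2β})/2 - (a+b)/2 + 1 = 0), and define f_β and g̃ as before. Then f_β(t) ≤ g̃(β) < 0 for all t ≤ 0. -/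
private lemma aux_quad (A B c u v w : ℝ) (hB : 0 < B) (hv : B*v^2 + A = c*v) (hvu : v < u)
    (hw : u < w) (hq0 : B*w^2 + A < c*w) : B*u^2 + A < c*u := by
  nlinarith [mul_pos (sub_pos.2 hvu) (sub_pos.2 hq0),
    mul_pos (mul_pos (sub_pos.2 hvu) (sub_pos.2 hw)) hB,
    mul_pos (sub_pos.2 (hvu.trans hw)) (sub_pos.2 hw),
    mul_pos (mul_pos (sub_pos.2 hvu) (sub_pos.2 hw)) (mul_pos (sub_pos.2 (hvu.trans hw)) hB)]

private lemma aux_case1 (P Q E x R t s : ℝ) (hP0 : 0 < P) (hQ0 : 0 < Q)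
    (hRs : 2*R*s = s^2 + P*Q) (hts : 2*t*s = s^2 - P*Q) (hs0 : 0 < s) (hE : s = P*E)
    (key1 : E * (1 - x) ≤ 1) (key2 : 1 + x ≤ E) : R - t*x ≤ (P+Q)/2 := by
  have hE0 : 0 < E := by
    rcases lt_trichotomy E 0 with h | h | h
    · nlinarith
    · rw [h, mul_zero] at hE; linarith
    · exact h
  have hId1 : 2 * s * ((P + Q) / 2 - (R - t * x))
      = P * ((P * E) * (1 - E * (1 - x))) + (P * Q) * (E - (1 + x)) := by
    linear_combination (-1 : ℝ) * hRs + x * hts + ((P + Q) - (1 - x) * (s + P * E)) * hE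
  have h1 : 0 ≤ P * ((P * E) * (1 - E * (1 - x))) := by
    apply mul_nonneg hP0.le
    apply mul_nonneg (by positivity)
    linarith
  have h2 : 0 ≤ (P * Q) * (E - (1 + x)) := by
    apply mul_nonneg (by positivity)
    linarith
  nlinarith [hId1]

private lemma aux_case2 (s m x R t : ℝ) (hs0 : 0 < s) (hm0 : 0 < m) (hsm : s ≤ m)
    (hxr : x*m ≤ s - m) (hRs : 2*R*s = s^2 + m^2) (hts : 2*t*s = s^2 - m^2) :
    R - t*x ≤ m := by
  have hId2 : 2 * s * m * (m - (R - t * x))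
      = (s - m - x * m) * ((m - s) * (s + m)) + s * (s - m) ^ 2 := by
    linear_combination (-m) * hRs + (x * m) * hts
  have hterm1 : 0 ≤ (s - m - x * m) * ((m - s) * (s + m)) := by
    apply mul_nonneg (by linarith)
    apply mul_nonneg (by linarith) (by linarith)
  have hterm2 : 0 ≤ s * (s - m) ^ 2 := by positivity
  nlinarith [hId2, mul_pos hs0 hm0]

private lemma aux_root (a b v : ℝ) (hv0 : 0 < v)
    (h0 : (b * v + a * v⁻¹) / 2 - (a + b) / 2 + 1 = 0) : b*v^2 + a = (a+b-2)*v := by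
  have hvne : v ≠ 0 := hv0.ne'
  field_simp at h0
  nlinarith [h0]

private lemma aux_gneg (a b u : ℝ) (hu0 : 0 < u) (hquad : b * u ^ 2 + a < (a + b - 2) * u) :
    (b * u + a * u⁻¹) / 2 - (a + b) / 2 + 1 < 0 := by
  have hdiv : (b * u + a * u⁻¹) / 2 - (a + b) / 2 + 1
      = (b * u ^ 2 + a - (a + b - 2) * u) / (2 * u) := by
    field_simp
    ring
  rw [hdiv]
  exact div_neg_of_neg_of_pos (by linarith) (by positivity)

private lemma aux_sep (sa sb s2 : ℝ) (h : s2 < sa - sb) (h2 : s2^2 = 2) (h20 : 0 ≤ s2) :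
    2*(sa*sb) + 2 < sa^2 + sb^2 := by
  nlinarith [mul_pos (sub_pos.2 h) (show (0:ℝ) < sa - sb + s2 by nlinarith)]

private lemma aux_s0 (R t c : ℝ) (hR0 : 0 ≤ R) (hR2 : R^2 = t^2 + c) (hc : 0 < c) :
    0 < R + t := by nlinarith

private lemma aux_sm (s m t : ℝ) (hs0 : 0 < s) (hm0 : 0 < m) (h2ts : 2*t*s = s^2 - m^2)
    (ht : t ≤ 0) : s ≤ m := by nlinarith [mul_nonpos_of_nonpos_of_nonneg ht hs0.le]

private lemma aux_q0 (a b sa sb : ℝ) (hsa : sa^2 = a) (hsb : sb^2 = b) (hsa0 : 0 < sa)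
    (hsb0 : 0 < sb) (hsep' : 2*(sa*sb) + 2 < a + b) :
    b*(sa/sb)^2 + a < (a+b-2)*(sa/sb) := by
  have hlhs : b * (sa / sb) ^ 2 = a := by
    field_simp
    nlinarith [hsa, hsb]
  rw [hlhs, ← mul_div_assoc, lt_div_iff₀ hsb0]
  nlinarith [mul_pos (show 0 < a + b - 2 - 2 * (sa * sb) by linarith) hsa0]

set_option maxHeartbeats 1000000 in
/-- If `√a - √b > √2` and `β > β*` (the smaller root of `g`),
then `f_β(t) ≤ g̃(β) < 0` for all `t ≤ 0`. -/
theorem stmt9 (a b β : ℝ) (hb : 0 < b) (hab : b < a)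
    (hsep : Real.sqrt 2 < Real.sqrt a - Real.sqrt b)
    (g : ℝ → ℝ)
    (hg : ∀ β', g β' = (b * Real.exp (2 * β') + a * Real.exp (-2 * β')) / 2
      - (a + b) / 2 + 1)
    (βstar : ℝ) (hroot : g βstar = 0) (hsmall : ∀ β', g β' = 0 → βstar ≤ β')
    (hβ : βstar < β) :
    let f : ℝ → ℝ := fun t => Real.sqrt (t ^ 2 + a * b)
      - t * (Real.log (Real.sqrt (t ^ 2 + a * b) + t) - Real.log b)
      - (a + b) / 2 + 1 + 2 * β * t
    let gt : ℝ → ℝ := fun β' => if β' < (1 / 4) * Real.log (a / b) then g β'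
      else Real.sqrt (a * b) - (a + b) / 2 + 1
    ∀ t : ℝ, t ≤ 0 → f t ≤ gt β ∧ gt β < 0 := by
  intro f gt t ht
  have ha : 0 < a := hb.trans hab
  have hab' : 0 < a * b := mul_pos ha hb
  set sa := Real.sqrt a with hsadef
  set sb := Real.sqrt b with hsbdef
  set m := Real.sqrt (a * b) with hmdef
  have hsa : sa ^ 2 = a := Real.sq_sqrt ha.le
  have hsb : sb ^ 2 = b := Real.sq_sqrt hb.le
  have hsa0 : 0 < sa := Real.sqrt_pos.2 ha
  have hsb0 : 0 < sb := Real.sqrt_pos.2 hb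
  have hm0 : 0 < m := Real.sqrt_pos.2 hab'
  have hmval : m = sa * sb := Real.sqrt_mul ha.le b
  have hm2 : m ^ 2 = a * b := Real.sq_sqrt hab'.le
  have hsep' : 2 * (sa * sb) + 2 < a + b := by
    have := aux_sep sa sb (Real.sqrt 2) hsep (Real.sq_sqrt (by norm_num)) (Real.sqrt_nonneg 2)
    rw [hsa, hsb] at this
    exact this
  have hneg : m - (a + b) / 2 + 1 < 0 := by rw [hmval]; linarith
  -- setup s, x
  have ht2 : 0 < t ^ 2 + a * b := by positivity
  set R := Real.sqrt (t ^ 2 + a * b) with hRdef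
  have hR2 : R ^ 2 = t ^ 2 + a * b := Real.sq_sqrt ht2.le
  have hR0 : 0 ≤ R := Real.sqrt_nonneg _
  have hs0 : 0 < R + t := aux_s0 R t (a*b) hR0 hR2 hab'
  set s := R + t with hsdef
  have hRs : 2 * R * s = s ^ 2 + a * b := by rw [hsdef]; linear_combination hR2
  have hts : 2 * t * s = s ^ 2 - a * b := by rw [hsdef]; linear_combination (-1 : ℝ) * hR2
  set x := Real.log s - Real.log b - 2 * β with hxdef
  set E := Real.exp x with hEdef
  have hE0 : 0 < E := Real.exp_pos x
  have hft : f t = R - t * x + (1 - (a + b) / 2) := by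
    show R - t * (Real.log s - Real.log b) - (a + b) / 2 + 1 + 2 * β * t = _
    rw [hxdef]; ring
  have key1 : E * (1 - x) ≤ 1 := by
    have h := Real.add_one_le_exp (-x)
    have h2 := mul_le_mul_of_nonneg_left h (Real.exp_pos x).le
    rw [← Real.exp_add, add_neg_cancel, Real.exp_zero] at h2
    calc E * (1 - x) = Real.exp x * (-x + 1) := by rw [hEdef]; ring
    _ ≤ 1 := h2
  have key2 : 1 + x ≤ E := by
    have := Real.add_one_le_exp x
    rw [hEdef]; linarith
  by_cases hcase : β < (1 / 4) * Real.log (a / b)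
  · -- β below the threshold
    have hgt : gt β = g β := if_pos hcase
    set P := b * Real.exp (2 * β) with hPdef
    set Q := a * Real.exp (-2 * β) with hQdef
    have hP0 : 0 < P := by positivity
    have hQ0 : 0 < Q := by positivity
    have hPQ : a * b = P * Q := by
      rw [hPdef, hQdef, show b * Real.exp (2*β) * (a * Real.exp (-2*β))
        = a * b * (Real.exp (2*β) * Real.exp (-2*β)) by ring, ← Real.exp_add]
      norm_num
    have hE : s = P * E := by
      have hlog : Real.log b + 2 * β + x = Real.log s := by rw [hxdef]; ring
      rw [← Real.exp_log hs0, ← hlog, Real.exp_add, Real.exp_add, Real.exp_log hb, hPdef, hEdef]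
    rw [hPQ] at hRs hts
    have hmain : R - t * x ≤ (P + Q) / 2 :=
      aux_case1 P Q E x R t s hP0 hQ0 hRs hts hs0 hE key1 key2
    constructor
    · rw [hgt, hg β, hft]
      linarith
    -- negativity of g β
    rw [hgt, hg β]
    set u := Real.exp (2 * β) with hudef
    set v := Real.exp (2 * βstar) with hvdef
    have hu0 : 0 < u := Real.exp_pos _
    have hv0 : 0 < v := Real.exp_pos _
    have hvu : v < u := Real.exp_lt_exp.2 (by linarith)
    have hvinv : Real.exp (-2 * βstar) = v⁻¹ := by
      rw [show (-2 * βstar : ℝ) = -(2 * βstar) by ring, Real.exp_neg, hvdef]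
    have huinv : Real.exp (-2 * β) = u⁻¹ := by
      rw [show (-2 * β : ℝ) = -(2 * β) by ring, Real.exp_neg, hudef]
    have hv : b * v ^ 2 + a = (a + b - 2) * v := by
      have h0 := hroot
      rw [hg βstar, hvinv] at h0
      exact aux_root a b v hv0 h0
    have hw : u < sa / sb := by
      have hlogdiv : Real.log (a / b) = Real.log a - Real.log b := Real.log_div ha.ne' hb.ne'
      have hsaexp : sa = Real.exp (Real.log a / 2) := by
        rw [hsadef, ← Real.exp_log (Real.sqrt_pos.2 ha), Real.log_sqrt ha.le]
      have hsbexp : sb = Real.exp (Real.log b / 2) := by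
        rw [hsbdef, ← Real.exp_log (Real.sqrt_pos.2 hb), Real.log_sqrt hb.le]
      rw [hudef, hsaexp, hsbexp, ← Real.exp_sub]
      exact Real.exp_lt_exp.2 (by rw [hlogdiv] at hcase; linarith)
    have hq0 : b * (sa / sb) ^ 2 + a < (a + b - 2) * (sa / sb) :=
      aux_q0 a b sa sb hsa hsb hsa0 hsb0 hsep'
    have hquad : b * u ^ 2 + a < (a + b - 2) * u :=
      aux_quad a b (a + b - 2) u v (sa / sb) hb hv hvu hw hq0
    rw [huinv]
    exact aux_gneg a b u hu0 hquad
  · -- β at or above the threshold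
    have hgt : gt β = m - (a + b) / 2 + 1 := if_neg hcase
    refine ⟨?_, by rw [hgt]; exact hneg⟩
    rw [hgt, hft]
    rw [← hm2] at hRs hts
    have hsm : s ≤ m := aux_sm s m t hs0 hm0 hts ht
    have hlogm : Real.log m = (Real.log a + Real.log b) / 2 := by
      rw [hmdef, Real.log_sqrt hab'.le, Real.log_mul ha.ne' hb.ne']
    have hlogdiv : Real.log (a / b) = Real.log a - Real.log b := Real.log_div ha.ne' hb.ne'
    have hxlog : x ≤ Real.log s - Real.log m := by
      rw [hxdef, hlogm]
      rw [hlogdiv] at hcase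
      push_neg at hcase
      linarith
    have hlogr : Real.log s - Real.log m ≤ s / m - 1 := by
      rw [← Real.log_div hs0.ne' hm0.ne']
      exact Real.log_le_sub_one_of_pos (div_pos hs0 hm0)
    have hxr : x * m ≤ s - m := by
      have h := mul_le_mul_of_nonneg_right (hxlog.trans hlogr) hm0.le
      have h2 : (s / m - 1) * m = s - m := by field_simp
      exact h.trans_eq h2
    have hfin : R - t * x ≤ m := aux_case2 s m x R t hs0 hm0 hsm hxr hRs hts
    exact (add_le_add_left hfin (1 - (a + b) / 2)).trans_eq (by ring)
end

section
/- Let a, b, t be reals with a > b > 0, and suppose t ∈ [(b-a)/2, 0]. Define f(s) = a·e^{-s} + b·e^{s} - 2st. Then f is convex on ℝ and attains its minimum over [0, ∞) at s* = log(√(t² + ab) + t) - log(b) ≥ 0, with minimum value f(s*) = 2√(t² + ab) - 2t·(log(√(t² + ab) + t) - log(b)). -/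
/-- For `(b-a)/2 ≤ t ≤ 0`, the function
`f(s) = a e^{-s} + b e^{s} - 2st` is convex on `ℝ` and attains its minimum
over `[0, ∞)` at `s* = log(√(t²+ab)+t) - log b ≥ 0`, with
`f(s*) = 2√(t²+ab) - 2t(log(√(t²+ab)+t) - log b)`. -/
theorem stmt12 (a b t : ℝ) (hb : 0 < b) (hab : b < a)
    (ht1 : (b - a) / 2 ≤ t) (ht2 : t ≤ 0) :
    let f : ℝ → ℝ := fun s => a * Real.exp (-s) + b * Real.exp s - 2 * s * t
    let sstar : ℝ := Real.log (Real.sqrt (t ^ 2 + a * b) + t) - Real.log b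
    ConvexOn ℝ Set.univ f ∧ 0 ≤ sstar ∧
      (∀ s : ℝ, 0 ≤ s → f sstar ≤ f s) ∧
      f sstar = 2 * Real.sqrt (t ^ 2 + a * b)
        - 2 * t * (Real.log (Real.sqrt (t ^ 2 + a * b) + t) - Real.log b) := by
  intro f sstar
  have ha : 0 < a := hb.trans hab
  have hab0 : (0:ℝ) ≤ t ^ 2 + a * b := by positivity
  set r := Real.sqrt (t ^ 2 + a * b) with hrdef
  have hr2 : r ^ 2 = t ^ 2 + a * b := Real.sq_sqrt hab0
  have hr0 : 0 ≤ r := Real.sqrt_nonneg _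
  have hrt : 0 < r + t := by nlinarith [mul_pos ha hb]
  have hrt' : 0 < r - t := by linarith
  have hbrt : b ≤ r + t := by nlinarith
  have hs0 : 0 ≤ sstar := by
    have := Real.log_le_log hb hbrt
    simp only [sstar]
    linarith
  have hes : Real.exp sstar = (r + t) / b := by
    simp only [sstar]
    rw [Real.exp_sub, Real.exp_log hrt, Real.exp_log hb]
  have hens : Real.exp (-sstar) = b / (r + t) := by
    rw [Real.exp_neg, hes]
    rw [inv_div]
  have key1 : a * (b / (r + t)) = r - t := by
    field_simp
    nlinarith [hr2]
  have key2 : b * ((r + t) / b) = r + t := by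
    field_simp
  have hfs : f sstar = 2 * r - 2 * t * sstar := by
    simp only [f]
    rw [hens, hes, key1, key2]
    ring
  refine ⟨?_, hs0, ?_, by rw [hfs]⟩
  · refine ⟨convex_univ, fun x _ y _ p q hp hq hpq => ?_⟩
    have h1 := convexOn_exp.2 (Set.mem_univ (-x)) (Set.mem_univ (-y)) hp hq hpq
    have h2 := convexOn_exp.2 (Set.mem_univ x) (Set.mem_univ y) hp hq hpq
    simp only [smul_eq_mul, f] at h1 h2 ⊢
    have hx : -(p * x + q * y) = p * (-x) + q * (-y) := by ring
    rw [hx]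
    nlinarith [mul_le_mul_of_nonneg_left h1 ha.le,
      mul_le_mul_of_nonneg_left h2 hb.le]
  · intro s _
    have h1 : sstar - s + 1 ≤ Real.exp (sstar - s) := Real.add_one_le_exp _
    have h2 : s - sstar + 1 ≤ Real.exp (s - sstar) := Real.add_one_le_exp _
    have he1 : Real.exp (-s) = Real.exp (-sstar) * Real.exp (sstar - s) := by
      rw [← Real.exp_add]; ring_nf
    have he2 : Real.exp s = Real.exp sstar * Real.exp (s - sstar) := by
      rw [← Real.exp_add]; ring_nf
    have hA : (r - t) * (sstar - s + 1) ≤ (r - t) * Real.exp (sstar - s) :=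
      mul_le_mul_of_nonneg_left h1 hrt'.le
    have hB : (r + t) * (s - sstar + 1) ≤ (r + t) * Real.exp (s - sstar) :=
      mul_le_mul_of_nonneg_left h2 hrt.le
    have : f s = (r - t) * Real.exp (sstar - s) + (r + t) * Real.exp (s - sstar)
        - 2 * s * t := by
      simp only [f]
      rw [he1, he2, hens, hes, ← mul_assoc, ← mul_assoc, key1, key2]
    rw [this, hfs]
    nlinarith [hA, hB]
end

section
/- Let A ~ Binomial(n/2 - 1, a·log(n)/n) and B ~ Binomial(n/2, b·log(n)/n) be independent, where a > b > 0. Then for every t ∈ [(b-a)/2, 0], P(B - A ≥ t·log(n)) ≤ exp(log(n)·(√(t² + ab) - t·(log(√(t² + ab) + t) - log(b)) - (a+b)/2 + O(log(n)/n))). -/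
open Finset

/-- Probability mass function of the binomial distribution with `N` trials and
success probability `p`, evaluated at `k`. -/
noncomputable def binomPMF (N : ℕ) (p : ℝ) (k : ℕ) : ℝ :=
  (N.choose k : ℝ) * p ^ k * (1 - p) ^ (N - k)

lemma mgf_binom (N : ℕ) (p s : ℝ) :
    ∑ k ∈ Finset.range (N + 1), binomPMF N p k * Real.exp (s * k)
      = (p * Real.exp s + (1 - p)) ^ N := by
  rw [add_pow]
  refine Finset.sum_congr rfl fun k hk => ?_
  rw [binomPMF, mul_pow, show Real.exp s ^ k = Real.exp (s * k) by
    rw [← Real.exp_nat_mul]; ring_nf]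
  ring

lemma base_le_exp {x : ℝ} (hx : 0 ≤ 1 + x) (N : ℕ) :
    (x + 1) ^ N ≤ Real.exp (N * x) := by
  calc (x + 1) ^ N ≤ (Real.exp x) ^ N :=
        pow_le_pow_left₀ (by linarith) (Real.add_one_le_exp x) N
    _ = Real.exp (N * x) := by rw [← Real.exp_nat_mul]

lemma binomPMF_nonneg {N k : ℕ} {p : ℝ} (h0 : 0 ≤ p) (h1 : p ≤ 1) :
    0 ≤ binomPMF N p k := by
  unfold binomPMF
  have : (0:ℝ) ≤ 1 - p := by linarith
  positivity

set_option maxHeartbeats 2000000 in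
/-- For independent `A ~ Binom(n/2 - 1, a log n / n)` and
`B ~ Binom(n/2, b log n / n)` with `a > b > 0`, for every `t ∈ [(b-a)/2, 0]`,
`P(B - A ≥ t log n) ≤ exp(log n (√(t²+ab) - t(log(√(t²+ab)+t) - log b)
- (a+b)/2 + O(log n / n)))`. -/
theorem stmt14 (a b : ℝ) (hb : 0 < b) (hab : b < a) :
    ∃ C : ℝ, 0 < C ∧ ∃ N0 : ℕ, ∀ n : ℕ, Even n → N0 ≤ n →
      ∀ t : ℝ, (b - a) / 2 ≤ t → t ≤ 0 →
        (∑ k ∈ Finset.range (n / 2), ∑ l ∈ Finset.range (n / 2 + 1),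
            if t * Real.log n ≤ (l : ℝ) - (k : ℝ) then
              binomPMF (n / 2 - 1) (a * Real.log n / n) k *
                binomPMF (n / 2) (b * Real.log n / n) l
            else 0)
          ≤ Real.exp (Real.log n *
              (Real.sqrt (t ^ 2 + a * b)
                - t * (Real.log (Real.sqrt (t ^ 2 + a * b) + t) - Real.log b)
                - (a + b) / 2 + C * Real.log n / n)) := by
  have ha : 0 < a := hb.trans hab
  refine ⟨a, ha, ?_⟩
  -- choose N0 so that a * log n / n ≤ 1 and n ≥ 4
  have hlim : Filter.Tendsto (fun n : ℕ => a * (Real.log n / n)) Filter.atTop (nhds 0) := by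
    have h1 : Filter.Tendsto (fun x : ℝ => Real.log x / x) Filter.atTop (nhds 0) :=
      Real.isLittleO_log_id_atTop.tendsto_div_nhds_zero
    simpa using (h1.comp tendsto_natCast_atTop_atTop).const_mul a
  have hev : ∀ᶠ n : ℕ in Filter.atTop, a * (Real.log n / n) ≤ 1 :=
    hlim.eventually (eventually_le_nhds one_pos)
  obtain ⟨N1, hN1⟩ := Filter.eventually_atTop.mp hev
  refine ⟨max N1 4, fun n heven hn t ht1 ht2 => ?_⟩
  have hn4 : 4 ≤ n := le_trans (le_max_right _ _) hn
  have hnN1 : N1 ≤ n := le_trans (le_max_left _ _) hn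
  obtain ⟨m, rfl⟩ : ∃ m, n = m + m := heven
  rw [show (m + m) / 2 = m from by omega]
  have hm2 : 2 ≤ m := by omega
  have hn0 : (0:ℝ) < ((m + m : ℕ) : ℝ) := by exact_mod_cast (by omega : 0 < m + m)
  set L := Real.log ((m + m : ℕ) : ℝ) with hLdef
  have hL1 : 1 ≤ L := by
    rw [hLdef, Real.le_log_iff_exp_le hn0]
    have h4 : (4:ℝ) ≤ ((m + m : ℕ) : ℝ) := by exact_mod_cast hn4
    nlinarith [Real.exp_one_lt_d9]
  have hL0 : 0 ≤ L := by linarith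
  set p := a * L / ((m + m : ℕ) : ℝ) with hpdef
  set q := b * L / ((m + m : ℕ) : ℝ) with hqdef
  have hp0 : 0 ≤ p := by positivity
  have hq0 : 0 ≤ q := by positivity
  have hp1 : p ≤ 1 := by
    have := hN1 (m + m) hnN1
    rw [hpdef, mul_div_assoc]; exact this
  clear hlim hev hN1 hn hnN1
  have hba := hab.le
  have hqp : q ≤ p := by rw [hqdef, hpdef]; gcongr
  have hq1 : q ≤ 1 := hqp.trans hp1
  set r := Real.sqrt (t ^ 2 + a * b) with hrdef
  have hr0 : 0 ≤ r := Real.sqrt_nonneg _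
  have hrsq : r ^ 2 = t ^ 2 + a * b := Real.sq_sqrt (by nlinarith)
  have hrt : 0 < r + t := by nlinarith [mul_pos ha hb]
  have hbrt : b ≤ r + t := by nlinarith
  set s := Real.log (r + t) - Real.log b with hsdef
  have hs0 : 0 ≤ s := by
    rw [hsdef, sub_nonneg]
    exact Real.log_le_log hb hbrt
  have hE : Real.exp s = (r + t) / b := by
    rw [hsdef, Real.exp_sub, Real.exp_log hrt, Real.exp_log hb]
  have hF : Real.exp (-s) = b / (r + t) := by
    rw [Real.exp_neg, hE, inv_div]
  set E := Real.exp s with hEdef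
  set F := Real.exp (-s) with hFdef
  clear_value L p q r s E F
  have hF0 : 0 ≤ F := hFdef ▸ Real.exp_nonneg _
  have hF1 : F ≤ 1 := by rw [hFdef]; exact Real.exp_le_one_iff.mpr (by linarith)
  have hE1 : 1 ≤ E := by rw [hEdef]; exact Real.one_le_exp hs0
  -- key algebraic identity
  have hkey : a / 2 * F + b / 2 * E = r := by
    rw [hF, hE]
    field_simp
    linear_combination -1 * hrsq
  have hm0 : (0:ℝ) < m := by positivity
  have hcast : ((m:ℝ)) * 2 = ((m + m : ℕ) : ℝ) := by push_cast; ring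
  have hcm1 : ((m - 1 : ℕ) : ℝ) = (m:ℝ) - 1 := by
    have h1 : 1 ≤ m := by omega
    push_cast [h1]; ring
  have hmp : (m:ℝ) * p = a * L / 2 := by
    rw [hpdef]
    rw [← hcast]
    field_simp
  have hmq : (m:ℝ) * q = b * L / 2 := by
    rw [hqdef, ← hcast]
    field_simp
  -- MGF computations
  have hSA : ∑ k ∈ Finset.range m, binomPMF (m - 1) p k * Real.exp (-s * k)
      = (p * F + (1 - p)) ^ (m - 1) := by
    have h := mgf_binom (m - 1) p (-s)
    rw [show m - 1 + 1 = m from by omega] at h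
    rw [hFdef]
    exact h
  have hSB : ∑ l ∈ Finset.range (m + 1), binomPMF m q l * Real.exp (s * l)
      = (q * E + (1 - q)) ^ m := by rw [hEdef]; exact mgf_binom m q s
  have hbaseA : 0 ≤ 1 + p * (F - 1) := by linarith [mul_nonneg hp0 hF0]
  have hbaseB : 0 ≤ 1 + q * (E - 1) := by linarith [mul_nonneg hq0 (sub_nonneg.mpr hE1)]
  calc (∑ k ∈ Finset.range m, ∑ l ∈ Finset.range (m + 1),
          if t * L ≤ (l : ℝ) - (k : ℝ) then binomPMF (m - 1) p k * binomPMF m q l else 0)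
      ≤ ∑ k ∈ Finset.range m, ∑ l ∈ Finset.range (m + 1),
          (binomPMF (m - 1) p k * Real.exp (-s * k)) *
            (binomPMF m q l * Real.exp (s * l)) * Real.exp (-(s * (t * L))) := by
        refine Finset.sum_le_sum fun k _ => Finset.sum_le_sum fun l _ => ?_
        have hfk := binomPMF_nonneg (N := m - 1) (k := k) hp0 hp1
        have hgl := binomPMF_nonneg (N := m) (k := l) hq0 hq1
        split_ifs with hcond
        · have hexp : (1:ℝ) ≤ Real.exp (-s * k + s * l + -(s * (t * L))) := by
            apply Real.one_le_exp
            have := mul_le_mul_of_nonneg_left hcond hs0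
            linarith [this]
          calc binomPMF (m - 1) p k * binomPMF m q l
              = binomPMF (m - 1) p k * binomPMF m q l * 1 := (mul_one _).symm
            _ ≤ binomPMF (m - 1) p k * binomPMF m q l *
                  Real.exp (-s * k + s * l + -(s * (t * L))) :=
                mul_le_mul_of_nonneg_left hexp (mul_nonneg hfk hgl)
            _ = _ := by rw [Real.exp_add, Real.exp_add]; ring
        · exact mul_nonneg (mul_nonneg (mul_nonneg hfk (Real.exp_nonneg _))
            (mul_nonneg hgl (Real.exp_nonneg _))) (Real.exp_nonneg _)
    _ = (∑ k ∈ Finset.range m, binomPMF (m - 1) p k * Real.exp (-s * k)) *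
          (∑ l ∈ Finset.range (m + 1), binomPMF m q l * Real.exp (s * l)) *
          Real.exp (-(s * (t * L))) := by
        rw [Finset.sum_mul_sum, Finset.sum_mul]
        refine Finset.sum_congr rfl fun k _ => ?_
        rw [Finset.sum_mul]
    _ = (p * F + (1 - p)) ^ (m - 1) * (q * E + (1 - q)) ^ m * Real.exp (-(s * (t * L))) := by
        rw [hSA, hSB]
    _ ≤ Real.exp (((m - 1 : ℕ) : ℝ) * (p * (F - 1))) * Real.exp ((m : ℝ) * (q * (E - 1))) *
          Real.exp (-(s * (t * L))) := by
        have hA : (p * F + (1 - p)) ^ (m - 1) ≤ Real.exp (((m - 1 : ℕ) : ℝ) * (p * (F - 1))) := by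
          have h := base_le_exp (x := p * (F - 1)) hbaseA (m - 1)
          calc (p * F + (1 - p)) ^ (m - 1) = (p * (F - 1) + 1) ^ (m - 1) := by ring_nf
            _ ≤ _ := h
        have hB : (q * E + (1 - q)) ^ m ≤ Real.exp ((m : ℝ) * (q * (E - 1))) := by
          have h := base_le_exp (x := q * (E - 1)) hbaseB m
          calc (q * E + (1 - q)) ^ m = (q * (E - 1) + 1) ^ m := by ring_nf
            _ ≤ _ := h
        exact mul_le_mul (mul_le_mul hA hB
            (pow_nonneg (by linarith [hbaseB]) _) (Real.exp_nonneg _))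
          le_rfl (Real.exp_nonneg _) (mul_nonneg (Real.exp_nonneg _) (Real.exp_nonneg _))
    _ = Real.exp (((m - 1 : ℕ) : ℝ) * (p * (F - 1)) + (m : ℝ) * (q * (E - 1)) +
          -(s * (t * L))) := by rw [← Real.exp_add, ← Real.exp_add]
    _ ≤ Real.exp (L * (r - t * s - (a + b) / 2 + p)) := by
        rw [Real.exp_le_exp, hcm1]
        have hmpF : (m:ℝ) * p * F = a * L / 2 * F := by rw [hmp]
        have hmqE : (m:ℝ) * q * E = b * L / 2 * E := by rw [hmq]
        have hkeyL : a * L / 2 * F + b * L / 2 * E = L * r := by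
          linear_combination L * hkey
        have h1 : p * (1 - F) ≤ p := by linarith [mul_nonneg hp0 hF0]
        have h2 : p ≤ L * p := le_mul_of_one_le_left hp0 hL1
        linarith [hmpF, hmqE, hkeyL, h1, h2, hmp, hmq]
end

section
/- Let R_1,…,R_n, S_1,…,S_n be Bernoulli (i.e., {0,1}-valued) random variables such that S_1,…,S_n are mutually independent, and suppose that for all i ∈ [n] and all (r_1,…,r_n) ∈ {0,1}^n, P(S_i = 1) ≤ P(R_i = 1 | R_j = r_j for all j ≠ i). Let R = R_1 + ⋯ + R_n and S = S_1 + ⋯ + S_n. Then P(R ≥ k) ≥ P(S ≥ k) for every k ∈ [n]. -/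
open MeasureTheory ProbabilityTheory

/-- Summing `hle` over configuration atoms: for `a ∉ s`,
`P(S_a = 1) * P(∑_{i∈s} R_i = m) ≤ P({R_a = 1} ∩ {∑_{i∈s} R_i = m})`. -/
lemma stmt15_key {Ω : Type*} [MeasurableSpace Ω] (μ : MeasureTheory.Measure Ω)
    (n : ℕ) (R S : Fin n → Ω → ℕ)
    (hRmeas : ∀ i, Measurable (R i))
    (hRval : ∀ i ω, R i ω ≤ 1)
    (hle : ∀ i : Fin n, ∀ r : Fin n → ℕ, (∀ j, r j ≤ 1) →
      μ {ω | S i ω = 1} * μ {ω | ∀ j, j ≠ i → R j ω = r j}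
        ≤ μ ({ω | R i ω = 1} ∩ {ω | ∀ j, j ≠ i → R j ω = r j}))
    (a : Fin n) (s : Finset (Fin n)) (ha : a ∉ s) (m : ℕ) :
    μ {ω | S a ω = 1} * μ {ω | ∑ i ∈ s, R i ω = m}
      ≤ μ ({ω | R a ω = 1} ∩ {ω | ∑ i ∈ s, R i ω = m}) := by
  classical
  set A : (Fin n → ℕ) → Set Ω := fun r => {ω | ∀ j, j ≠ a → R j ω = r j} with hA
  set F : Finset (Fin n → ℕ) :=
    (Fintype.piFinset (fun _ => ({0, 1} : Finset ℕ))).filter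
      (fun r => r a = 0 ∧ ∑ i ∈ s, r i = m) with hF
  have hAmeas : ∀ r, MeasurableSet (A r) := by
    intro r
    have h1 : A r = ⋂ j, {ω | j ≠ a → R j ω = r j} := by
      ext ω; simp [hA, Set.mem_iInter]
    rw [h1]
    refine MeasurableSet.iInter fun j => ?_
    by_cases hj : j = a
    · subst hj; simp
    · have h2 : {ω | j ≠ a → R j ω = r j} = R j ⁻¹' {r j} := by
        ext ω; simp [hj]
      rw [h2]; exact (hRmeas j) (measurableSet_singleton _)
  have hmemF : ∀ r ∈ F, (∀ j, r j ≤ 1) ∧ r a = 0 ∧ ∑ i ∈ s, r i = m := by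
    intro r hr
    simp only [hF, Finset.mem_filter, Fintype.mem_piFinset, Finset.mem_insert,
      Finset.mem_singleton] at hr
    refine ⟨fun j => ?_, hr.2.1, hr.2.2⟩
    rcases hr.1 j with h | h <;> omega
  have hdisj : (↑F : Set (Fin n → ℕ)).PairwiseDisjoint A := by
    intro r hr r' hr' hne
    refine Set.disjoint_left.2 fun ω hω hω' => hne ?_
    have h1 := (hmemF r hr).2.1
    have h2 := (hmemF r' hr').2.1
    funext j
    by_cases hj : j = a
    · subst hj; rw [h1, h2]
    · exact (hω j hj).symm.trans (hω' j hj)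
  have hE : {ω | ∑ i ∈ s, R i ω = m} = ⋃ r ∈ F, A r := by
    ext ω
    simp only [Set.mem_setOf_eq, Set.mem_iUnion, exists_prop]
    constructor
    · intro h
      refine ⟨fun j => if j = a then 0 else R j ω, ?_, ?_⟩
      · simp only [hF, Finset.mem_filter, Fintype.mem_piFinset, Finset.mem_insert,
          Finset.mem_singleton]
        refine ⟨fun j => ?_, by simp, ?_⟩
        · by_cases hj : j = a
          · simp [hj]
          · have := hRval j ω; simp only [hj, if_false]; omega
        · rw [← h]
          refine Finset.sum_congr rfl fun i hi => ?_
          have hia : i ≠ a := fun e => ha (e ▸ hi)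
          simp [hia]
      · intro j hj; simp [hj, hA]
    · rintro ⟨r, hr, hω⟩
      rw [← (hmemF r hr).2.2]
      exact Finset.sum_congr rfl fun i hi => hω i (fun e => ha (e ▸ hi))
  have hμE : μ {ω | ∑ i ∈ s, R i ω = m} = ∑ r ∈ F, μ (A r) := by
    rw [hE, measure_biUnion_finset hdisj (fun r _ => hAmeas r)]
  have hμE2 : μ ({ω | R a ω = 1} ∩ {ω | ∑ i ∈ s, R i ω = m})
      = ∑ r ∈ F, μ ({ω | R a ω = 1} ∩ A r) := by
    rw [hE, Set.inter_iUnion₂]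
    refine measure_biUnion_finset ?_
      (fun r _ => ((hRmeas a) (measurableSet_singleton 1)).inter (hAmeas r))
    intro r hr r' hr' hne
    exact (hdisj hr hr' hne).mono Set.inter_subset_right Set.inter_subset_right
  rw [hμE, hμE2, Finset.mul_sum]
  exact Finset.sum_le_sum fun r hr => hle a r (hmemF r hr).1

/-- Let `R_1, …, R_n, S_1, …, S_n` be `{0,1}`-valued random
variables such that the `S_i` are mutually independent and, for every `i` and
every configuration `r ∈ {0,1}ⁿ` of the other coordinates,
`P(S_i = 1) ≤ P(R_i = 1 | R_j = r_j for all j ≠ i)` (stated multiplicatively so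
that it is automatic when the conditioning event is null). Then
`P(R ≥ k) ≥ P(S ≥ k)` for every `k ∈ [n]`, where `R = Σ R_i`, `S = Σ S_i`. -/
theorem stmt15 {Ω : Type*} [MeasurableSpace Ω] (μ : MeasureTheory.Measure Ω)
    [MeasureTheory.IsProbabilityMeasure μ]
    (n : ℕ) (R S : Fin n → Ω → ℕ)
    (hRmeas : ∀ i, Measurable (R i)) (hSmeas : ∀ i, Measurable (S i))
    (hRval : ∀ i ω, R i ω ≤ 1) (hSval : ∀ i ω, S i ω ≤ 1)
    (hindep : ProbabilityTheory.iIndepFun S μ)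
    (hle : ∀ i : Fin n, ∀ r : Fin n → ℕ, (∀ j, r j ≤ 1) →
      μ {ω | S i ω = 1} * μ {ω | ∀ j, j ≠ i → R j ω = r j}
        ≤ μ ({ω | R i ω = 1} ∩ {ω | ∀ j, j ≠ i → R j ω = r j})) :
    ∀ k : ℕ, 1 ≤ k → k ≤ n →
      μ {ω | k ≤ ∑ i, S i ω} ≤ μ {ω | k ≤ ∑ i, R i ω} := by
  classical
  have hMS : ∀ s : Finset (Fin n), Measurable fun ω => ∑ i ∈ s, S i ω :=
    fun s => Finset.measurable_sum s fun i _ => hSmeas i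
  have hMR : ∀ s : Finset (Fin n), Measurable fun ω => ∑ i ∈ s, R i ω :=
    fun s => Finset.measurable_sum s fun i _ => hRmeas i
  have hfin : ∀ X : Set Ω, μ X ≠ ⊤ := fun X => measure_ne_top μ X
  have main : ∀ s : Finset (Fin n), ∀ k : ℕ,
      μ {ω | k ≤ ∑ i ∈ s, S i ω} ≤ μ {ω | k ≤ ∑ i ∈ s, R i ω} := by
    intro s
    induction s using Finset.induction_on with
    | empty =>
        intro k
        cases k with
        | zero => simp
        | succ k => simp
    | @insert a s ha ih =>
        intro k
        cases k with
        | zero => simp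
        | succ k =>
          set A1 : Set Ω := {ω | k ≤ ∑ i ∈ s, S i ω} with hA1
          set A2 : Set Ω := {ω | k + 1 ≤ ∑ i ∈ s, S i ω} with hA2
          set B1 : Set Ω := {ω | k ≤ ∑ i ∈ s, R i ω} with hB1
          set B2 : Set Ω := {ω | k + 1 ≤ ∑ i ∈ s, R i ω} with hB2
          set B0 : Set Ω := {ω | ∑ i ∈ s, R i ω = k} with hB0
          set T1 : Set Ω := {ω | S a ω = 1} with hT1
          set Ra1 : Set Ω := {ω | R a ω = 1} with hRa1
          have mA1 : MeasurableSet A1 := hMS s measurableSet_Ici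
          have mA2 : MeasurableSet A2 := hMS s measurableSet_Ici
          have mB2 : MeasurableSet B2 := hMR s measurableSet_Ici
          have mB0 : MeasurableSet B0 := hMR s (measurableSet_singleton k)
          have mT1 : MeasurableSet T1 := hSmeas a (measurableSet_singleton 1)
          have mRa1 : MeasurableSet Ra1 := hRmeas a (measurableSet_singleton 1)
          -- S-side decomposition
          have hSsplit : {ω | k + 1 ≤ ∑ i ∈ insert a s, S i ω}
              = (A1 ∩ T1) ∪ (A2 \ T1) := by
            ext ω
            have h1 := hSval a ω
            simp only [Finset.sum_insert ha, Set.mem_union, Set.mem_inter_iff,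
              Set.mem_diff, hA1, hA2, hT1, Set.mem_setOf_eq]
            omega
          have hdisjS : Disjoint (A1 ∩ T1) (A2 \ T1) :=
            Set.disjoint_left.2 fun ω h h' => h'.2 h.2
          -- independence facts
          have hind : IndepFun (∑ j ∈ s, S j) (S a) μ :=
            hindep.indepFun_finsetSum_of_notMem hSmeas ha
          have hpre : ∀ (m : ℕ), (∑ j ∈ s, S j) ⁻¹' Set.Ici m = {ω | m ≤ ∑ i ∈ s, S i ω} := by
            intro m; ext ω; simp [Finset.sum_apply]
          have ind1 : μ (A1 ∩ T1) = μ A1 * μ T1 := by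
            have h := hind.measure_inter_preimage_eq_mul (Set.Ici k) ({1} : Set ℕ)
              measurableSet_Ici (measurableSet_singleton 1)
            rw [hpre k] at h
            exact h
          have ind2 : μ (A2 ∩ T1) = μ A2 * μ T1 := by
            have h := hind.measure_inter_preimage_eq_mul (Set.Ici (k + 1)) ({1} : Set ℕ)
              measurableSet_Ici (measurableSet_singleton 1)
            rw [hpre (k + 1)] at h
            exact h
          have split2 : μ (A2 ∩ T1) + μ (A2 \ T1) = μ A2 :=
            measure_inter_add_diff A2 mT1
          -- R-side
          have hRsub : (B0 ∩ Ra1) ∪ B2 ⊆ {ω | k + 1 ≤ ∑ i ∈ insert a s, R i ω} := by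
            intro ω hω
            have h1 := hRval a ω
            simp only [Set.mem_union, Set.mem_inter_iff, hB0, hB2, hRa1,
              Set.mem_setOf_eq] at hω
            simp only [Finset.sum_insert ha, Set.mem_setOf_eq]
            omega
          have hdisjR : Disjoint (B0 ∩ Ra1) B2 := by
            refine Set.disjoint_left.2 fun ω hω hω' => ?_
            simp only [Set.mem_inter_iff, hB0, hB2, Set.mem_setOf_eq] at hω hω'
            omega
          have hR1 : μ (B0 ∩ Ra1) + μ B2 ≤ μ {ω | k + 1 ≤ ∑ i ∈ insert a s, R i ω} := by
            rw [← measure_union hdisjR mB2]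
            exact measure_mono hRsub
          have keyineq : μ T1 * μ B0 ≤ μ (Ra1 ∩ B0) :=
            stmt15_key μ n R S hRmeas hRval hle a s ha k
          have hBsplit : μ B0 + μ B2 = μ B1 := by
            rw [← measure_union ?_ mB2]
            · congr 1
              ext ω
              simp only [Set.mem_union, hB0, hB1, hB2, Set.mem_setOf_eq]
              omega
            · refine Set.disjoint_left.2 fun ω hω hω' => ?_
              simp only [hB0, hB2, Set.mem_setOf_eq] at hω hω'
              omega
          have ihk : μ A1 ≤ μ B1 := ih k
          have ihk1 : μ A2 ≤ μ B2 := ih (k + 1)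
          have hT1le : μ T1 ≤ 1 := prob_le_one
          -- convert to reals
          rw [← ENNReal.toReal_le_toReal (hfin _) (hfin _)]
          have r1 : (μ {ω | k + 1 ≤ ∑ i ∈ insert a s, S i ω}).toReal
              = (μ A1).toReal * (μ T1).toReal + (μ (A2 \ T1)).toReal := by
            rw [hSsplit, measure_union hdisjS (mA2.diff mT1), ind1,
              ENNReal.toReal_add (ENNReal.mul_ne_top (hfin _) (hfin _)) (hfin _),
              ENNReal.toReal_mul]
          have r2 : (μ (A2 ∩ T1)).toReal + (μ (A2 \ T1)).toReal = (μ A2).toReal := by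
            rw [← ENNReal.toReal_add (hfin _) (hfin _), split2]
          have r2' : (μ (A2 ∩ T1)).toReal = (μ A2).toReal * (μ T1).toReal := by
            rw [ind2, ENNReal.toReal_mul]
          have r3 : (μ (B0 ∩ Ra1)).toReal + (μ B2).toReal
              ≤ (μ {ω | k + 1 ≤ ∑ i ∈ insert a s, R i ω}).toReal := by
            rw [← ENNReal.toReal_add (hfin _) (hfin _)]
            exact ENNReal.toReal_mono (hfin _) hR1
          have r4 : (μ T1).toReal * (μ B0).toReal ≤ (μ (B0 ∩ Ra1)).toReal := by
            rw [← ENNReal.toReal_mul]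
            refine ENNReal.toReal_mono (hfin _) ?_
            rw [Set.inter_comm]
            exact keyineq
          have r5 : (μ B0).toReal + (μ B2).toReal = (μ B1).toReal := by
            rw [← ENNReal.toReal_add (hfin _) (hfin _), hBsplit]
          have r6 : (μ A1).toReal ≤ (μ B1).toReal := ENNReal.toReal_mono (hfin _) ihk
          have r7 : (μ A2).toReal ≤ (μ B2).toReal := ENNReal.toReal_mono (hfin _) ihk1
          have r8 : (μ T1).toReal ≤ 1 := by
            have := ENNReal.toReal_mono (by simp) hT1le
            simpa using this
          have q0 : (0 : ℝ) ≤ (μ T1).toReal := ENNReal.toReal_nonneg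
          rw [r1]
          nlinarith [mul_le_mul_of_nonneg_right r6 q0,
            mul_le_mul_of_nonneg_right r7 (sub_nonneg.2 r8)]
  intro k _ _
  exact main Finset.univ k
end

section
/- Let R_1,…,R_n, S̄_1,…,S̄_n be Bernoulli random variables such that S̄_1,…,S̄_n are mutually independent, and suppose that for all i ∈ [n] and all (r_1,…,r_n) ∈ {0,1}^n, P(R_i = 1 | R_j = r_j for all j ≠ i) ≤ P(S̄_i = 1). Let R = Σ R_i and S̄ = Σ S̄_i. Then P(R ≤ k) ≥ P(S̄ ≤ k) for every k ∈ [n]. -/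
open MeasureTheory ProbabilityTheory
open scoped ENNReal

private lemma stmt16_combine (p x x' a b : ℝ≥0∞) (hp : p ≤ 1) (h1 : x ≤ x')
    (h2 : x + a ≤ x' + b) : x + p * a ≤ x' + p * b := by
  calc x + p * a = ((1 - p) + p) * x + p * a := by
        rw [tsub_add_cancel_of_le hp, one_mul]
    _ = (1 - p) * x + p * (x + a) := by ring
    _ ≤ (1 - p) * x' + p * (x' + b) := by gcongr
    _ = ((1 - p) + p) * x' + p * b := by ring
    _ = x' + p * b := by rw [tsub_add_cancel_of_le hp, one_mul]

private lemma stmt16_lemA {Ω : Type*} [MeasurableSpace Ω] (μ : MeasureTheory.Measure Ω)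
    (n : ℕ) (R : Fin n → Ω → ℕ) (hRmeas : ∀ i, Measurable (R i))
    (hRval : ∀ i ω, R i ω ≤ 1) (m : Fin n) (p : ℝ≥0∞)
    (hge : ∀ r : Fin n → ℕ, (∀ j, r j ≤ 1) →
      μ ({ω | R m ω = 1} ∩ {ω | ∀ j, j ≠ m → R j ω = r j})
        ≤ p * μ {ω | ∀ j, j ≠ m → R j ω = r j})
    (I : Finset (Fin n)) (hm : m ∉ I) (t : ℕ) :
    μ ({ω | R m ω = 1} ∩ {ω | ∑ j ∈ I, R j ω = t})
      ≤ p * μ {ω | ∑ j ∈ I, R j ω = t} := by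
  classical
  set A : Set Ω := {ω | ∑ j ∈ I, R j ω = t} with hA
  set cell : (Fin n → Fin 2) → Set Ω :=
    fun v => {ω | v m = 0 ∧ ∀ j, j ≠ m → R j ω = (v j : ℕ)} with hcell
  have hAmeas : MeasurableSet A :=
    (Finset.measurable_sum I fun j _ => hRmeas j) (measurableSet_singleton t)
  have hcellmeas : ∀ v, MeasurableSet (cell v) := by
    intro v
    have : cell v = {ω : Ω | v m = 0} ∩ ⋂ (j : Fin n), {ω | j ≠ m → R j ω = (v j : ℕ)} := by
      ext ω; simp [hcell, Set.mem_iInter]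
    rw [this]
    refine MeasurableSet.inter ?_ (MeasurableSet.iInter fun j => ?_)
    · by_cases h : v m = 0 <;> simp [h]
    · by_cases h : j = m
      · subst h
        have : {ω : Ω | j ≠ j → R j ω = (v j : ℕ)} = Set.univ := by
          ext ω; simp
        rw [this]; exact MeasurableSet.univ
      · have : {ω : Ω | j ≠ m → R j ω = (v j : ℕ)} = (R j) ⁻¹' {(v j : ℕ)} := by
          ext ω; simp [h]
        rw [this]; exact hRmeas j (measurableSet_singleton _)
  have hdisj : Pairwise (Function.onFun Disjoint cell) := by
    intro v w hvw
    rw [Function.onFun, Set.disjoint_left]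
    intro ω hv hw
    apply hvw
    funext j
    by_cases h : j = m
    · subst h; rw [hv.1, hw.1]
    · exact Fin.val_injective (by rw [← hv.2 j h, ← hw.2 j h])
  have hcover : (⋃ v, cell v) = Set.univ := by
    ext ω
    simp only [Set.mem_iUnion, Set.mem_univ, iff_true]
    refine ⟨fun j => if h : j = m then 0 else
      ⟨R j ω, lt_of_le_of_lt (hRval j ω) one_lt_two⟩, ?_, ?_⟩
    · simp
    · intro j hj; simp [hcell, hj]
  have hsum : ∀ s : Set Ω, MeasurableSet s → μ s = ∑ v : Fin n → Fin 2, μ (s ∩ cell v) := by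
    intro s hs
    have hu : s = ⋃ v, s ∩ cell v := by
      rw [← Set.inter_iUnion, hcover, Set.inter_univ]
    have hd : Pairwise (Function.onFun Disjoint fun v => s ∩ cell v) := fun v w hvw =>
      (hdisj hvw).mono Set.inter_subset_right Set.inter_subset_right
    calc μ s = μ (⋃ v, s ∩ cell v) := by rw [← hu]
      _ = ∑' v, μ (s ∩ cell v) := measure_iUnion hd (fun v => hs.inter (hcellmeas v))
      _ = ∑ v : Fin n → Fin 2, μ (s ∩ cell v) := tsum_fintype _
  have hs1 : MeasurableSet {ω : Ω | R m ω = 1} := hRmeas m (measurableSet_singleton 1)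
  rw [hsum ({ω | R m ω = 1} ∩ A) (hs1.inter hAmeas), hsum A hAmeas, Finset.mul_sum]
  apply Finset.sum_le_sum
  intro v _
  by_cases hv0 : v m = 0
  · by_cases hvt : (∑ j ∈ I, (v j : ℕ)) = t
    · have hsub : cell v ⊆ A := by
        intro ω hω
        show ∑ j ∈ I, R j ω = t
        rw [← hvt]
        exact Finset.sum_congr rfl fun j hj => hω.2 j (fun h => hm (h ▸ hj))
      have e2 : A ∩ cell v = cell v := Set.inter_eq_right.mpr hsub
      have e1 : ({ω | R m ω = 1} ∩ A) ∩ cell v = {ω | R m ω = 1} ∩ cell v := by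
        rw [Set.inter_assoc, e2]
      rw [e1, e2]
      have hcv : cell v = {ω | ∀ j, j ≠ m → R j ω = (fun j => (v j : ℕ)) j} := by
        ext ω; simp [hcell, hv0]
      rw [hcv]
      exact hge (fun j => (v j : ℕ)) (fun j => Nat.lt_succ_iff.mp (v j).isLt)
    · have he : A ∩ cell v = ∅ := by
        ext ω
        simp only [Set.mem_inter_iff, Set.mem_empty_iff_false, iff_false, not_and]
        intro hA' hc
        apply hvt
        calc ∑ j ∈ I, (v j : ℕ) = ∑ j ∈ I, R j ω :=
              Finset.sum_congr rfl fun j hj => (hc.2 j (fun h => hm (h ▸ hj))).symm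
          _ = t := hA'
      calc μ (({ω | R m ω = 1} ∩ A) ∩ cell v) ≤ μ (A ∩ cell v) :=
            measure_mono (by intro ω h; exact ⟨h.1.2, h.2⟩)
        _ = 0 := by rw [he, measure_empty]
        _ ≤ p * μ (A ∩ cell v) := zero_le
  · have : cell v = ∅ := by
      ext ω; simp [hcell, hv0]
    simp [this]

/-- Let `R_1, …, R_n, S̄_1, …, S̄_n` be `{0,1}`-valued random
variables such that the `S̄_i` are mutually independent and, for every `i` and
every configuration `r ∈ {0,1}ⁿ` of the other coordinates,
`P(R_i = 1 | R_j = r_j for all j ≠ i) ≤ P(S̄_i = 1)` (stated multiplicatively so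
that it is automatic when the conditioning event is null). Then
`P(R ≤ k) ≥ P(S̄ ≤ k)` for every `k ∈ [n]`, where `R = Σ R_i`, `S̄ = Σ S̄_i`. -/
theorem stmt16 {Ω : Type*} [MeasurableSpace Ω] (μ : MeasureTheory.Measure Ω)
    [MeasureTheory.IsProbabilityMeasure μ]
    (n : ℕ) (R Sbar : Fin n → Ω → ℕ)
    (hRmeas : ∀ i, Measurable (R i)) (hSmeas : ∀ i, Measurable (Sbar i))
    (hRval : ∀ i ω, R i ω ≤ 1) (hSval : ∀ i ω, Sbar i ω ≤ 1)
    (hindep : ProbabilityTheory.iIndepFun Sbar μ)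
    (hge : ∀ i : Fin n, ∀ r : Fin n → ℕ, (∀ j, r j ≤ 1) →
      μ ({ω | R i ω = 1} ∩ {ω | ∀ j, j ≠ i → R j ω = r j})
        ≤ μ {ω | Sbar i ω = 1} * μ {ω | ∀ j, j ≠ i → R j ω = r j}) :
    ∀ k : ℕ, 1 ≤ k → k ≤ n →
      μ {ω | (∑ i, Sbar i ω) ≤ k} ≤ μ {ω | (∑ i, R i ω) ≤ k} := by
  classical
  have hRsm : ∀ (I : Finset (Fin n)), Measurable (fun ω => ∑ j ∈ I, R j ω) :=
    fun I => Finset.measurable_sum I fun j _ => hRmeas j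
  have hSsm : ∀ (I : Finset (Fin n)), Measurable (fun ω => ∑ j ∈ I, Sbar j ω) :=
    fun I => Finset.measurable_sum I fun j _ => hSmeas j
  have hmeqR : ∀ (I : Finset (Fin n)) (t : ℕ), MeasurableSet {ω : Ω | ∑ j ∈ I, R j ω = t} :=
    fun I t => (hRsm I) (measurableSet_singleton t)
  have hmeqS : ∀ (I : Finset (Fin n)) (t : ℕ), MeasurableSet {ω : Ω | ∑ j ∈ I, Sbar j ω = t} :=
    fun I t => (hSsm I) (measurableSet_singleton t)
  have keyR : ∀ (m : Fin n) (I : Finset (Fin n)), m ∉ I → ∀ t : ℕ,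
      μ ({ω | R m ω = 1} ∩ {ω | ∑ j ∈ I, R j ω = t})
        ≤ μ {ω | Sbar m ω = 1} * μ {ω | ∑ j ∈ I, R j ω = t} :=
    fun m I hm t => stmt16_lemA μ n R hRmeas hRval m _ (hge m) I hm t
  have keyS : ∀ (m : Fin n) (I : Finset (Fin n)), m ∉ I → ∀ t : ℕ,
      μ ({ω | Sbar m ω = 1} ∩ {ω | ∑ j ∈ I, Sbar j ω = t})
        = μ {ω | Sbar m ω = 1} * μ {ω | ∑ j ∈ I, Sbar j ω = t} := by
    intro m I hm t
    have h := (hindep.indepFun_finsetSum_of_notMem hSmeas hm).symm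
    have key := h.measure_inter_preimage_eq_mul ({1} : Set ℕ) ({t} : Set ℕ)
      (measurableSet_singleton _) (measurableSet_singleton _)
    simpa [Set.preimage, Finset.sum_apply] using key
  have main : ∀ (I : Finset (Fin n)) (k : ℕ),
      μ {ω | k ≤ ∑ j ∈ I, R j ω} ≤ μ {ω | k ≤ ∑ j ∈ I, Sbar j ω} := by
    intro I
    induction I using Finset.induction_on with
    | empty => intro k; simp
    | @insert m I hm ih =>
      intro k
      match k with
      | 0 => simp
      | (k+1) =>
        have hp : μ {ω | Sbar m ω = 1} ≤ 1 := prob_le_one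
        have hsplitR : {ω | k+1 ≤ ∑ j ∈ insert m I, R j ω}
            = {ω | k+1 ≤ ∑ j ∈ I, R j ω} ∪ ({ω | R m ω = 1} ∩ {ω | ∑ j ∈ I, R j ω = k}) := by
          ext ω
          simp only [Set.mem_setOf_eq, Set.mem_union, Set.mem_inter_iff, Finset.sum_insert hm]
          have := hRval m ω
          omega
        have hsplitS : {ω | k+1 ≤ ∑ j ∈ insert m I, Sbar j ω}
            = {ω | k+1 ≤ ∑ j ∈ I, Sbar j ω}
              ∪ ({ω | Sbar m ω = 1} ∩ {ω | ∑ j ∈ I, Sbar j ω = k}) := by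
          ext ω
          simp only [Set.mem_setOf_eq, Set.mem_union, Set.mem_inter_iff, Finset.sum_insert hm]
          have := hSval m ω
          omega
        have hdR : Disjoint {ω | k+1 ≤ ∑ j ∈ I, R j ω}
            ({ω | R m ω = 1} ∩ {ω | ∑ j ∈ I, R j ω = k}) := by
          rw [Set.disjoint_left]
          intro ω h1 h2
          simp only [Set.mem_setOf_eq, Set.mem_inter_iff] at h1 h2
          omega
        have hdS : Disjoint {ω | k+1 ≤ ∑ j ∈ I, Sbar j ω}
            ({ω | Sbar m ω = 1} ∩ {ω | ∑ j ∈ I, Sbar j ω = k}) := by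
          rw [Set.disjoint_left]
          intro ω h1 h2
          simp only [Set.mem_setOf_eq, Set.mem_inter_iff] at h1 h2
          omega
        have hmR : MeasurableSet ({ω | R m ω = 1} ∩ {ω | ∑ j ∈ I, R j ω = k}) :=
          ((hRmeas m) (measurableSet_singleton 1)).inter (hmeqR I k)
        have hmS : MeasurableSet ({ω | Sbar m ω = 1} ∩ {ω | ∑ j ∈ I, Sbar j ω = k}) :=
          ((hSmeas m) (measurableSet_singleton 1)).inter (hmeqS I k)
        rw [hsplitR, hsplitS, measure_union hdR hmR, measure_union hdS hmS, keyS m I hm k]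
        refine le_trans (add_le_add_right (keyR m I hm k) _) ?_
        refine stmt16_combine _ _ _ _ _ hp (ih (k+1)) ?_
        have hmergeR : μ {ω | k+1 ≤ ∑ j ∈ I, R j ω} + μ {ω | ∑ j ∈ I, R j ω = k}
            = μ {ω | k ≤ ∑ j ∈ I, R j ω} := by
          rw [← measure_union (by
              rw [Set.disjoint_left]; intro ω h1 h2
              simp only [Set.mem_setOf_eq] at h1 h2; omega)
            (hmeqR I k)]
          congr 1
          ext ω; simp only [Set.mem_union, Set.mem_setOf_eq]; omega
        have hmergeS : μ {ω | k+1 ≤ ∑ j ∈ I, Sbar j ω} + μ {ω | ∑ j ∈ I, Sbar j ω = k}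
            = μ {ω | k ≤ ∑ j ∈ I, Sbar j ω} := by
          rw [← measure_union (by
              rw [Set.disjoint_left]; intro ω h1 h2
              simp only [Set.mem_setOf_eq] at h1 h2; omega)
            (hmeqS I k)]
          congr 1
          ext ω; simp only [Set.mem_union, Set.mem_setOf_eq]; omega
        rw [hmergeR, hmergeS]
        exact ih k
  intro k _ _
  have h1 : {ω | (∑ i, R i ω) ≤ k} = {ω | k+1 ≤ ∑ j ∈ Finset.univ, R j ω}ᶜ := by
    ext ω; simp only [Set.mem_setOf_eq, Set.mem_compl_iff]; omega
  have h2 : {ω | (∑ i, Sbar i ω) ≤ k} = {ω | k+1 ≤ ∑ j ∈ Finset.univ, Sbar j ω}ᶜ := by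
    ext ω; simp only [Set.mem_setOf_eq, Set.mem_compl_iff]; omega
  have hmR : MeasurableSet {ω | k+1 ≤ ∑ j ∈ Finset.univ, R j ω} :=
    (hRsm Finset.univ) measurableSet_Ici
  have hmS : MeasurableSet {ω | k+1 ≤ ∑ j ∈ Finset.univ, Sbar j ω} :=
    (hSsm Finset.univ) measurableSet_Ici
  rw [h1, h2, measure_compl hmR (measure_ne_top μ _), measure_compl hmS (measure_ne_top μ _)]
  exact tsub_le_tsub_left (main Finset.univ (k+1)) _
end
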